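/- Let d₂ > 0, τ ∈ (0,1], c_T > 0, and for l > 0 let λ₁(l) denote the principal Dirichlet eigenvalue infimum λ₁(l) = inf over nonzero ω ∈ H¹₀((0,l)) of [d₂τ ∫₀ˡ (ω')² − d₂(1−τ) ∫₀ˡ∫₀ˡ J(x−y) ω(y)ω(x) dy dx] / ∫₀ˡ ω² + d₂(1−τ) − c_T, where J satisfies: Lipschitz, nonnegative, symmetric, ∫_ℝ J = 1. Then (i) λ₁(l) ≥ d₂τ · π²/l² − c_T (using the kernel bound ∫∫J ωω ≤ ∫ω²), hence lim_{l→0⁺} λ₁(l) = +∞; and (ii) liminf_{l→∞} λ₁(l) ≥ −c_T. -/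

import Mathlib

open Set Filter

/-- The Rayleigh-type quotient for the mixed local–nonlocal Dirichlet operator
`−(𝓛̃_{(0,l)} + c_T)` evaluated at a test function `ω` with derivative `ω'`. -/
noncomputable def rayleighQuot (d₂ τ cT : ℝ) (J : ℝ → ℝ) (l : ℝ) (ω ω' : ℝ → ℝ) : ℝ :=
  (d₂ * τ * (∫ x in (0:ℝ)..l, (ω' x) ^ 2)
      - d₂ * (1 - τ) * ∫ x in (0:ℝ)..l, ∫ y in (0:ℝ)..l, J (x - y) * ω y * ω x)
    / (∫ x in (0:ℝ)..l, (ω x) ^ 2)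
  + d₂ * (1 - τ) - cT

/-- The principal eigenvalue `λ₁(l)` as the infimum of the Rayleigh quotients over
(smooth representatives of) nonzero functions in `H¹₀((0,l))`. -/
noncomputable def lambdaOne (d₂ τ cT : ℝ) (J : ℝ → ℝ) (l : ℝ) : ℝ :=
  sInf {r : ℝ | ∃ ω ω' : ℝ → ℝ, (∀ x, HasDerivAt ω (ω' x) x) ∧ Continuous ω' ∧
    ω 0 = 0 ∧ ω l = 0 ∧ (0 < ∫ x in (0:ℝ)..l, (ω x) ^ 2) ∧
    r = rayleighQuot d₂ τ cT J l ω ω'}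

open MeasureTheory Real Topology


set_option maxHeartbeats 1000000 in
lemma poincare {l : ℝ} (hl : 0 < l) (ω ω' : ℝ → ℝ)
    (hderiv : ∀ x, HasDerivAt ω (ω' x) x) (hc : Continuous ω')
    (h0 : ω 0 = 0) (hl0 : ω l = 0) :
    (π / l) ^ 2 * ∫ x in (0:ℝ)..l, ω x ^ 2 ≤ ∫ x in (0:ℝ)..l, ω' x ^ 2 := by
  have hωc : Continuous ω := continuous_iff_continuousAt.mpr fun x => (hderiv x).continuousAt
  set k : ℝ := π / l with hk
  have hkpos : 0 < k := div_pos pi_pos hl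
  have hkl : k * l = π := div_mul_cancel₀ _ hl.ne'
  set h : ℝ → ℝ := fun x => ω' x ^ 2 - k ^ 2 * ω x ^ 2 with hh
  have hhc : Continuous h := (hc.pow 2).sub (continuous_const.mul (hωc.pow 2))
  have hint : ∀ a b : ℝ, IntervalIntegrable h volume a b := fun a b => hhc.intervalIntegrable a b
  set g : ℝ → ℝ := fun x => k * ω x ^ 2 * Real.cos (k * x) / Real.sin (k * x) with hg
  set G : ℝ → ℝ := fun x =>
    ((k * (2 * ω x * ω' x) * Real.cos (k * x) + k * ω x ^ 2 * (-(Real.sin (k * x)) * k))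
        * Real.sin (k * x)
      - k * ω x ^ 2 * Real.cos (k * x) * (Real.cos (k * x) * k)) / Real.sin (k * x) ^ 2
    with hG
  -- sin(kx) positive on Ioo 0 l
  have hsin : ∀ x ∈ Ioo (0:ℝ) l, 0 < Real.sin (k * x) := by
    intro x hx
    apply Real.sin_pos_of_pos_of_lt_pi (mul_pos hkpos hx.1)
    · calc k * x < k * l := by nlinarith [hx.2]
        _ = π := hkl
  -- derivative of g
  have hgderiv : ∀ x ∈ Ioo (0:ℝ) l, HasDerivAt g (G x) x := by
    intro x hx
    have hs := (hsin x hx).ne'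
    have hkx : HasDerivAt (fun y : ℝ => k * y) k x := by
      simpa using (hasDerivAt_id x).const_mul k
    have hsin' : HasDerivAt (fun y : ℝ => Real.sin (k * y)) (Real.cos (k * x) * k) x :=
      (Real.hasDerivAt_sin (k * x)).comp x hkx
    have hcos' : HasDerivAt (fun y : ℝ => Real.cos (k * y)) (-(Real.sin (k * x)) * k) x :=
      (Real.hasDerivAt_cos (k * x)).comp x hkx
    have hω2 : HasDerivAt (fun y : ℝ => k * ω y ^ 2) (k * (2 * ω x * ω' x)) x := by
      have := ((hderiv x).pow 2).const_mul k
      simpa [mul_comm, mul_assoc, mul_left_comm] using this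
    have hu : HasDerivAt (fun y : ℝ => k * ω y ^ 2 * Real.cos (k * y))
        (k * (2 * ω x * ω' x) * Real.cos (k * x) + k * ω x ^ 2 * (-(Real.sin (k * x)) * k)) x :=
      hω2.mul hcos'
    exact hu.div hsin' hs
  -- G ≤ h on Ioo 0 l
  have hGh : ∀ x ∈ Ioo (0:ℝ) l, G x ≤ h x := by
    intro x hx
    have hs := hsin x hx
    have hs2 : 0 < Real.sin (k * x) ^ 2 := by positivity
    simp only [hG, hh]
    rw [div_le_iff₀ hs2]
    nlinarith [Real.sin_sq_add_cos_sq (k * x),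
      sq_nonneg (ω' x * Real.sin (k * x) - k * ω x * Real.cos (k * x))]
  -- primitive of h
  set H : ℝ → ℝ := fun x => ∫ t in (0:ℝ)..x, h t with hHdef
  have hHc : Continuous H := intervalIntegral.continuous_primitive hint 0
  -- eventual inequality
  have hev : ∀ᶠ ε in 𝓝[>] (0:ℝ), g (l - ε) - g ε ≤ H (l - ε) - H ε := by
    filter_upwards [Ioo_mem_nhdsGT_of_mem (left_mem_Ico.mpr (half_pos hl))] with ε hε
    obtain ⟨hε0, hε2⟩ := hε
    have hab : ε ≤ l - ε := by linarith
    have hsub : Icc ε (l - ε) ⊆ Ioo 0 l := fun x hx =>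
      ⟨lt_of_lt_of_le hε0 hx.1, by linarith [hx.2]⟩
    have hGcont : ContinuousOn G (Icc ε (l - ε)) := by
      apply ContinuousOn.div
      · fun_prop
      · fun_prop
      · intro x hx; exact pow_ne_zero 2 (hsin x (hsub hx)).ne'
    have hGint : IntervalIntegrable G volume ε (l - ε) := by
      apply ContinuousOn.intervalIntegrable; rwa [uIcc_of_le hab]
    have h1 : ∫ x in ε..(l - ε), G x = g (l - ε) - g ε := by
      apply intervalIntegral.integral_eq_sub_of_hasDerivAt
      · intro x hx; rw [uIcc_of_le hab] at hx; exact hgderiv x (hsub hx)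
      · exact hGint
    have h2 : ∫ x in ε..(l - ε), G x ≤ ∫ x in ε..(l - ε), h x := by
      apply intervalIntegral.integral_mono_on hab hGint (hint _ _)
      intro x hx; exact hGh x (hsub hx)
    have h3 : H (l - ε) - H ε = ∫ x in ε..(l - ε), h x :=
      intervalIntegral.integral_interval_sub_left (hint 0 (l - ε)) (hint 0 ε)
    linarith [h1 ▸ h2]
  -- boundary limits
  have hω0 : Tendsto ω (𝓝[>] (0:ℝ)) (𝓝 0) := by
    have := (hωc.tendsto 0).mono_left (nhdsWithin_le_nhds (s := Ioi (0:ℝ)))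
    rwa [h0] at this
  have slope0 : Tendsto (fun ε => ω ε ^ 2 / ε) (𝓝[>] (0:ℝ)) (𝓝 0) := by
    have hs : Tendsto (fun ε : ℝ => ω ε / ε) (𝓝[>] (0:ℝ)) (𝓝 (ω' 0)) := by
      have h1 := (hasDerivAt_iff_tendsto_slope.mp (hderiv 0)).mono_left
        (nhdsWithin_mono 0 (fun x (hx : x ∈ Ioi (0:ℝ)) => ne_of_gt hx))
      refine h1.congr fun ε => ?_
      simp [slope_def_field, h0]
    have h2 := hs.mul hω0
    rw [mul_zero] at h2
    refine h2.congr fun ε => ?_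
    rw [div_mul_eq_mul_div, ← sq]
  have hωl : Tendsto (fun ε : ℝ => ω (l - ε)) (𝓝[>] (0:ℝ)) (𝓝 0) := by
    have h1 : Tendsto (fun ε : ℝ => l - ε) (𝓝[>] (0:ℝ)) (𝓝 l) := by
      have h2 : Continuous (fun ε : ℝ => l - ε) := continuous_const.sub continuous_id'
      have := (h2.tendsto (0:ℝ)).mono_left (nhdsWithin_le_nhds (s := Ioi (0:ℝ)))
      simpa using this
    have := (hωc.tendsto l).comp h1
    rw [hl0] at this
    exact this
  have slopel : Tendsto (fun ε => ω (l - ε) ^ 2 / ε) (𝓝[>] (0:ℝ)) (𝓝 0) := by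
    have hmap : Tendsto (fun ε : ℝ => l - ε) (𝓝[>] (0:ℝ)) (𝓝[≠] l) := by
      rw [tendsto_nhdsWithin_iff]
      constructor
      · have h1 : Continuous (fun ε : ℝ => l - ε) := continuous_const.sub continuous_id'
        have := (h1.tendsto (0:ℝ)).mono_left (nhdsWithin_le_nhds (s := Ioi (0:ℝ)))
        simpa using this
      · filter_upwards [self_mem_nhdsWithin] with ε (hε : (0:ℝ) < ε)
        simp only [mem_compl_iff, mem_singleton_iff]
        intro hcontra
        exact hε.ne' (sub_eq_self.mp hcontra)
    have hsl : Tendsto (fun ε : ℝ => slope ω l (l - ε)) (𝓝[>] (0:ℝ)) (𝓝 (ω' l)) :=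
      (hasDerivAt_iff_tendsto_slope.mp (hderiv l)).comp hmap
    have h2 := (hsl.neg).mul hωl
    rw [mul_zero] at h2
    refine h2.congr fun ε => ?_
    rw [slope_def_field, hl0]
    have he : l - ε - l = -ε := by ring
    rw [he, sub_zero, div_neg, neg_neg, div_mul_eq_mul_div, ← sq]
  have tendg0 : Tendsto (fun ε => g ε) (𝓝[>] (0:ℝ)) (𝓝 0) := by
    apply tendsto_of_tendsto_of_tendsto_of_le_of_le' tendsto_const_nhds slope0
    · filter_upwards [Ioo_mem_nhdsGT_of_mem (left_mem_Ico.mpr (half_pos hl))] with ε hε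
      obtain ⟨hε0, hε2⟩ := hε
      have hεl : ε ∈ Ioo 0 l := ⟨hε0, by linarith⟩
      have hs' := hsin ε hεl
      have hklt : k * ε < π / 2 := by
        have : k * (l / 2) = π / 2 := by rw [hk]; field_simp
        nlinarith
      have hc' : 0 < Real.cos (k * ε) :=
        Real.cos_pos_of_mem_Ioo ⟨by nlinarith [pi_pos, mul_pos hkpos hε0], hklt⟩
      simp only [hg]
      exact div_nonneg (mul_nonneg (mul_nonneg hkpos.le (sq_nonneg _)) hc'.le) hs'.le
    · filter_upwards [Ioo_mem_nhdsGT_of_mem (left_mem_Ico.mpr (half_pos hl))] with ε hε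
      obtain ⟨hε0, hε2⟩ := hε
      have hεl : ε ∈ Ioo 0 l := ⟨hε0, by linarith⟩
      have hs' := hsin ε hεl
      have hklt : k * ε < π / 2 := by
        have : k * (l / 2) = π / 2 := by rw [hk]; field_simp
        nlinarith
      have hc' : 0 < Real.cos (k * ε) :=
        Real.cos_pos_of_mem_Ioo ⟨by nlinarith [pi_pos, mul_pos hkpos hε0], hklt⟩
      have htan := Real.lt_tan (mul_pos hkpos hε0) hklt
      rw [Real.tan_eq_sin_div_cos, lt_div_iff₀ hc'] at htan
      simp only [hg]
      rw [div_le_div_iff₀ hs' hε0]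
      nlinarith [sq_nonneg (ω ε)]
  have tendgl : Tendsto (fun ε => g (l - ε)) (𝓝[>] (0:ℝ)) (𝓝 0) := by
    have hlow : Tendsto (fun ε => -(ω (l - ε) ^ 2 / ε)) (𝓝[>] (0:ℝ)) (𝓝 0) := by
      simpa using slopel.neg
    apply tendsto_of_tendsto_of_tendsto_of_le_of_le' hlow tendsto_const_nhds
    · filter_upwards [Ioo_mem_nhdsGT_of_mem (left_mem_Ico.mpr (half_pos hl))] with ε hε
      obtain ⟨hε0, hε2⟩ := hε
      have hbl : l - ε ∈ Ioo 0 l := ⟨by linarith, by linarith⟩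
      have hkb : k * (l - ε) = π - k * ε := by rw [mul_sub, hkl]
      have hsb : Real.sin (k * (l - ε)) = Real.sin (k * ε) := by rw [hkb, Real.sin_pi_sub]
      have hcb : Real.cos (k * (l - ε)) = -Real.cos (k * ε) := by rw [hkb, Real.cos_pi_sub]
      have hs' : 0 < Real.sin (k * ε) := by have := hsin _ hbl; rwa [hsb] at this
      have hklt : k * ε < π / 2 := by
        have : k * (l / 2) = π / 2 := by rw [hk]; field_simp
        nlinarith
      have hc' : 0 < Real.cos (k * ε) :=
        Real.cos_pos_of_mem_Ioo ⟨by nlinarith [pi_pos, mul_pos hkpos hε0], hklt⟩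
      have htan := Real.lt_tan (mul_pos hkpos hε0) hklt
      rw [Real.tan_eq_sin_div_cos, lt_div_iff₀ hc'] at htan
      simp only [hg, hsb, hcb]
      rw [mul_neg, neg_div, neg_le_neg_iff, div_le_div_iff₀ hs' hε0]
      nlinarith [sq_nonneg (ω (l - ε))]
    · filter_upwards [Ioo_mem_nhdsGT_of_mem (left_mem_Ico.mpr (half_pos hl))] with ε hε
      obtain ⟨hε0, hε2⟩ := hε
      have hbl : l - ε ∈ Ioo 0 l := ⟨by linarith, by linarith⟩
      have hkb : k * (l - ε) = π - k * ε := by rw [mul_sub, hkl]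
      have hsb : Real.sin (k * (l - ε)) = Real.sin (k * ε) := by rw [hkb, Real.sin_pi_sub]
      have hcb : Real.cos (k * (l - ε)) = -Real.cos (k * ε) := by rw [hkb, Real.cos_pi_sub]
      have hs' : 0 < Real.sin (k * ε) := by have := hsin _ hbl; rwa [hsb] at this
      have hklt : k * ε < π / 2 := by
        have : k * (l / 2) = π / 2 := by rw [hk]; field_simp
        nlinarith
      have hc' : 0 < Real.cos (k * ε) :=
        Real.cos_pos_of_mem_Ioo ⟨by nlinarith [pi_pos, mul_pos hkpos hε0], hklt⟩
      simp only [hg, hsb, hcb]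
      apply div_nonpos_of_nonpos_of_nonneg _ hs'.le
      rw [mul_neg]
      exact neg_nonpos_of_nonneg (mul_nonneg (mul_nonneg hkpos.le (sq_nonneg _)) hc'.le)
  have htendg : Tendsto (fun ε => g (l - ε) - g ε) (𝓝[>] (0:ℝ)) (𝓝 0) := by
    have h2 := tendgl.sub tendg0
    rwa [sub_zero] at h2
  have hΦ : Tendsto (fun ε => H (l - ε) - H ε) (𝓝[>] (0:ℝ)) (𝓝 (∫ x in (0:ℝ)..l, h x)) := by
    have hcont : Continuous fun ε : ℝ => H (l - ε) - H ε :=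
      (hHc.comp (continuous_const.sub continuous_id')).sub hHc
    have ht := (hcont.tendsto (0:ℝ)).mono_left (nhdsWithin_le_nhds (s := Ioi (0:ℝ)))
    have hval : H (l - 0) - H 0 = ∫ x in (0:ℝ)..l, h x := by
      rw [sub_zero]
      simp only [hHdef]
      rw [intervalIntegral.integral_same, sub_zero]
    rwa [hval] at ht
  have hmain : (0:ℝ) ≤ ∫ x in (0:ℝ)..l, h x := le_of_tendsto_of_tendsto htendg hΦ hev
  have hsplit : ∫ x in (0:ℝ)..l, h x =
      (∫ x in (0:ℝ)..l, ω' x ^ 2) - k ^ 2 * ∫ x in (0:ℝ)..l, ω x ^ 2 := by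
    simp only [hh]
    rw [intervalIntegral.integral_sub ((by fun_prop : Continuous fun x => ω' x ^ 2).intervalIntegrable _ _)
      ((by fun_prop : Continuous fun x => k ^ 2 * ω x ^ 2).intervalIntegrable _ _),
      intervalIntegral.integral_const_mul]
  rw [hsplit] at hmain
  linarith


lemma interval_swap {f : ℝ → ℝ → ℝ} (hf : Continuous (Function.uncurry f)) {l : ℝ} (hl : 0 ≤ l) :
    ∫ x in (0:ℝ)..l, ∫ y in (0:ℝ)..l, f x y = ∫ y in (0:ℝ)..l, ∫ x in (0:ℝ)..l, f x y := by
  simp_rw [intervalIntegral.integral_of_le hl]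
  apply MeasureTheory.integral_integral_swap
  rw [Measure.prod_restrict]
  exact ((hf.continuousOn.integrableOn_compact (isCompact_Icc.prod isCompact_Icc)).mono_set
    (prod_mono Ioc_subset_Icc_self Ioc_subset_Icc_self))

lemma kernel_bound {l : ℝ} (hl : 0 < l) {J : ℝ → ℝ} (hJc : Continuous J)
    (hJpos : ∀ x, 0 ≤ J x) (hJint : MeasureTheory.Integrable J) (hJ1 : ∫ x, J x = 1)
    {ω : ℝ → ℝ} (hωc : Continuous ω) :
    (∫ x in (0:ℝ)..l, ∫ y in (0:ℝ)..l, J (x - y) * ω y * ω x) ≤ ∫ x in (0:ℝ)..l, ω x ^ 2 := by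
  -- mass bounds for the kernel
  have hmass1 : ∀ x : ℝ, (∫ y in (0:ℝ)..l, J (x - y)) ≤ 1 := by
    intro x
    rw [intervalIntegral.integral_comp_sub_left J x, intervalIntegral.integral_of_le (by linarith)]
    rw [← hJ1]
    exact setIntegral_le_integral hJint (Eventually.of_forall hJpos)
  have hmass2 : ∀ y : ℝ, (∫ x in (0:ℝ)..l, J (x - y)) ≤ 1 := by
    intro y
    rw [intervalIntegral.integral_comp_sub_right J y, intervalIntegral.integral_of_le (by linarith)]
    rw [← hJ1]
    exact setIntegral_le_integral hJint (Eventually.of_forall hJpos)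
  have hmass_nonneg : ∀ x : ℝ, 0 ≤ ∫ y in (0:ℝ)..l, J (x - y) := by
    intro x
    apply intervalIntegral.integral_nonneg hl.le
    intro y _; exact hJpos _
  -- pointwise bound on the inner integral
  have inner_le : ∀ x : ℝ,
      (∫ y in (0:ℝ)..l, J (x - y) * ω y * ω x) ≤
        (∫ y in (0:ℝ)..l, J (x - y) * ω y ^ 2) / 2 + ω x ^ 2 / 2 := by
    intro x
    have c1 : Continuous fun y => J (x - y) * ω y * ω x := by fun_prop
    have c2 : Continuous fun y => (J (x - y) * ω y ^ 2 + J (x - y) * ω x ^ 2) / 2 := by fun_prop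
    calc (∫ y in (0:ℝ)..l, J (x - y) * ω y * ω x)
        ≤ ∫ y in (0:ℝ)..l, (J (x - y) * ω y ^ 2 + J (x - y) * ω x ^ 2) / 2 := by
          apply intervalIntegral.integral_mono_on hl.le (c1.intervalIntegrable _ _)
            (c2.intervalIntegrable _ _)
          intro y _
          nlinarith [hJpos (x - y), sq_nonneg (ω y - ω x), sq_nonneg (ω y + ω x)]
      _ = (∫ y in (0:ℝ)..l, J (x - y) * ω y ^ 2) / 2
            + (ω x ^ 2 * ∫ y in (0:ℝ)..l, J (x - y)) / 2 := by
          simp_rw [add_div]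
          rw [intervalIntegral.integral_add
            ((by fun_prop : Continuous fun y => J (x - y) * ω y ^ 2 / 2).intervalIntegrable _ _)
            ((by fun_prop : Continuous fun y => J (x - y) * ω x ^ 2 / 2).intervalIntegrable _ _)]
          rw [intervalIntegral.integral_div, intervalIntegral.integral_div]
          congr 1
          have he : (fun y => J (x - y) * ω x ^ 2) = fun y => ω x ^ 2 * J (x - y) := by
            funext y; ring
          rw [he, intervalIntegral.integral_const_mul]
      _ ≤ (∫ y in (0:ℝ)..l, J (x - y) * ω y ^ 2) / 2 + ω x ^ 2 / 2 := by
          have := hmass1 x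
          have h2 : ω x ^ 2 * (∫ y in (0:ℝ)..l, J (x - y)) ≤ ω x ^ 2 * 1 :=
            mul_le_mul_of_nonneg_left this (sq_nonneg _)
          rw [mul_one] at h2
          linarith
  have cH : Continuous fun x => ∫ y in (0:ℝ)..l, J (x - y) * ω y ^ 2 :=
    intervalIntegral.continuous_parametric_intervalIntegral_of_continuous' (by fun_prop) 0 l
  have cF : Continuous fun x => ∫ y in (0:ℝ)..l, J (x - y) * ω y * ω x := by
    exact intervalIntegral.continuous_parametric_intervalIntegral_of_continuous' (by fun_prop) 0 l
  have cG : Continuous fun x => (∫ y in (0:ℝ)..l, J (x - y) * ω y ^ 2) / 2 + ω x ^ 2 / 2 := by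
    fun_prop
  have step1 : (∫ x in (0:ℝ)..l, ∫ y in (0:ℝ)..l, J (x - y) * ω y * ω x)
      ≤ ∫ x in (0:ℝ)..l, ((∫ y in (0:ℝ)..l, J (x - y) * ω y ^ 2) / 2 + ω x ^ 2 / 2) :=
    intervalIntegral.integral_mono_on hl.le (cF.intervalIntegrable _ _)
      (cG.intervalIntegrable _ _) (fun x _ => inner_le x)
  have split : (∫ x in (0:ℝ)..l, ((∫ y in (0:ℝ)..l, J (x - y) * ω y ^ 2) / 2 + ω x ^ 2 / 2))
      = (∫ x in (0:ℝ)..l, ∫ y in (0:ℝ)..l, J (x - y) * ω y ^ 2) / 2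
        + (∫ x in (0:ℝ)..l, ω x ^ 2) / 2 := by
    rw [intervalIntegral.integral_add ((cH.div_const 2).intervalIntegrable _ _)
      ((by fun_prop : Continuous fun x => ω x ^ 2 / 2).intervalIntegrable _ _),
      intervalIntegral.integral_div, intervalIntegral.integral_div]
  have hswap : (∫ x in (0:ℝ)..l, ∫ y in (0:ℝ)..l, J (x - y) * ω y ^ 2)
      = ∫ y in (0:ℝ)..l, ∫ x in (0:ℝ)..l, J (x - y) * ω y ^ 2 :=
    interval_swap (f := fun x y => J (x - y) * ω y ^ 2) (by fun_prop) hl.le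
  have term1 : (∫ y in (0:ℝ)..l, ∫ x in (0:ℝ)..l, J (x - y) * ω y ^ 2)
      ≤ ∫ y in (0:ℝ)..l, ω y ^ 2 := by
    have cK : Continuous fun y => ∫ x in (0:ℝ)..l, J (x - y) * ω y ^ 2 :=
      intervalIntegral.continuous_parametric_intervalIntegral_of_continuous' (by fun_prop) 0 l
    apply intervalIntegral.integral_mono_on hl.le (cK.intervalIntegrable _ _)
      ((hωc.pow 2).intervalIntegrable _ _)
    intro y _
    have he : (fun x => J (x - y) * ω y ^ 2) = fun x => ω y ^ 2 * J (x - y) := by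
      funext x; ring
    rw [he, intervalIntegral.integral_const_mul]
    have h2 := mul_le_mul_of_nonneg_left (hmass2 y) (sq_nonneg (ω y))
    rw [mul_one] at h2
    exact h2
  linarith [step1, split, hswap, term1]


lemma rayleigh_lower {d₂ τ cT : ℝ} {J : ℝ → ℝ} {l : ℝ} (hl : 0 < l)
    (hd₂ : 0 < d₂) (hτ : 0 < τ) (hτ1 : τ ≤ 1) (hJc : Continuous J)
    (hJpos : ∀ x, 0 ≤ J x) (hJint : Integrable J) (hJ1 : ∫ x, J x = 1)
    {ω ω' : ℝ → ℝ} (hderiv : ∀ x, HasDerivAt ω (ω' x) x) (hc : Continuous ω')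
    (h0 : ω 0 = 0) (hll : ω l = 0) (hpos : 0 < ∫ x in (0:ℝ)..l, (ω x) ^ 2) :
    d₂ * τ * π ^ 2 / l ^ 2 - cT ≤ rayleighQuot d₂ τ cT J l ω ω' := by
  have hωc : Continuous ω := continuous_iff_continuousAt.mpr fun x => (hderiv x).continuousAt
  simp only [rayleighQuot]
  set C := ∫ x in (0:ℝ)..l, (ω x) ^ 2 with hC
  set A := ∫ x in (0:ℝ)..l, (ω' x) ^ 2 with hA
  set B := ∫ x in (0:ℝ)..l, ∫ y in (0:ℝ)..l, J (x - y) * ω y * ω x with hB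
  have hPA : (π / l) ^ 2 * C ≤ A := poincare hl ω ω' hderiv hc h0 hll
  have hBC : B ≤ C := kernel_bound hl hJc hJpos hJint hJ1 hωc
  have key : d₂ * τ * π ^ 2 / l ^ 2 - d₂ * (1 - τ) ≤ (d₂ * τ * A - d₂ * (1 - τ) * B) / C := by
    rw [le_div_iff₀ hpos]
    calc (d₂ * τ * π ^ 2 / l ^ 2 - d₂ * (1 - τ)) * C
        = d₂ * τ * ((π / l) ^ 2 * C) - d₂ * (1 - τ) * C := by field_simp
      _ ≤ d₂ * τ * A - d₂ * (1 - τ) * B := by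
          have h1 : d₂ * τ * ((π / l) ^ 2 * C) ≤ d₂ * τ * A :=
            mul_le_mul_of_nonneg_left hPA (by positivity)
          have h2 : d₂ * (1 - τ) * B ≤ d₂ * (1 - τ) * C :=
            mul_le_mul_of_nonneg_left hBC (by nlinarith)
          linarith
  linarith


lemma sine_sq_int {l : ℝ} (hl : 0 < l) :
    (∫ x in (0:ℝ)..l, Real.sin (Real.pi / l * x) ^ 2) = (Real.pi / l)⁻¹ * (Real.pi / 2) := by
  have h := intervalIntegral.integral_comp_mul_left (fun u => Real.sin u ^ 2)
    (c := Real.pi / l) (a := 0) (b := l) (div_pos Real.pi_pos hl).ne'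
  rw [h, mul_zero, div_mul_cancel₀ _ hl.ne', smul_eq_mul, integral_sin_sq]
  simp [Real.sin_pi]

lemma cosine_sq_int {l : ℝ} (hl : 0 < l) :
    (∫ x in (0:ℝ)..l, (Real.pi / l * Real.cos (Real.pi / l * x)) ^ 2)
      = (Real.pi / l) ^ 2 * ((Real.pi / l)⁻¹ * (Real.pi / 2)) := by
  simp_rw [mul_pow]
  rw [intervalIntegral.integral_const_mul]
  congr 1
  have h := intervalIntegral.integral_comp_mul_left (fun u => Real.cos u ^ 2)
    (c := Real.pi / l) (a := 0) (b := l) (div_pos Real.pi_pos hl).ne'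
  rw [h, mul_zero, div_mul_cancel₀ _ hl.ne', smul_eq_mul, integral_cos_sq]
  simp [Real.sin_pi]

lemma sine_mem (d₂ τ cT : ℝ) (J : ℝ → ℝ) {l : ℝ} (hl : 0 < l) :
    rayleighQuot d₂ τ cT J l (fun x => Real.sin (Real.pi / l * x))
      (fun x => Real.pi / l * Real.cos (Real.pi / l * x)) ∈
    {r : ℝ | ∃ ω ω' : ℝ → ℝ, (∀ x, HasDerivAt ω (ω' x) x) ∧ Continuous ω' ∧
      ω 0 = 0 ∧ ω l = 0 ∧ (0 < ∫ x in (0:ℝ)..l, (ω x) ^ 2) ∧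
      r = rayleighQuot d₂ τ cT J l ω ω'} := by
  refine ⟨(fun x => Real.sin (Real.pi / l * x)),
    (fun x => Real.pi / l * Real.cos (Real.pi / l * x)), ?_, by fun_prop, by simp, ?_, ?_, rfl⟩
  · intro x
    have hkx : HasDerivAt (fun y : ℝ => Real.pi / l * y) (Real.pi / l) x := by
      simpa using (hasDerivAt_id x).const_mul (Real.pi / l)
    have h2 := (Real.hasDerivAt_sin (Real.pi / l * x)).comp x hkx
    simpa [Function.comp_def, mul_comm] using h2
  · have hpl : Real.pi / l * l = Real.pi := div_mul_cancel₀ _ hl.ne'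
    simp [hpl]
  · rw [sine_sq_int hl]
    positivity

lemma sine_nonneg_on {l : ℝ} (hl : 0 < l) {x : ℝ} (hx : x ∈ Icc (0:ℝ) l) :
    0 ≤ Real.sin (Real.pi / l * x) := by
  apply Real.sin_nonneg_of_nonneg_of_le_pi
  · exact mul_nonneg (div_pos Real.pi_pos hl).le hx.1
  · have hpl : Real.pi / l * l = Real.pi := div_mul_cancel₀ _ hl.ne'
    calc Real.pi / l * x ≤ Real.pi / l * l :=
          mul_le_mul_of_nonneg_left hx.2 (div_pos Real.pi_pos hl).le
      _ = Real.pi := hpl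

/-- Lemma 3.4(i), quantitative part: for the principal eigenvalue
`λ₁(l)` of `−(𝓛̃_{(0,l)} + c_T)`:
(i) `λ₁(l) ≥ d₂τπ²/l² − c_T`, hence `λ₁(l) → +∞` as `l → 0⁺`;
(ii) `liminf_{l→∞} λ₁(l) ≥ −c_T`. -/
theorem stmt_19 (d₂ τ cT : ℝ) (J : ℝ → ℝ) (L : NNReal)
    (hd₂ : 0 < d₂) (hτ : 0 < τ) (hτ1 : τ ≤ 1) (hcT : 0 < cT)
    (hJlip : LipschitzWith L J) (hJpos : ∀ x, 0 ≤ J x)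
    (hJsymm : ∀ x, J (-x) = J x) (hJint : MeasureTheory.Integrable J)
    (hJ1 : ∫ x, J x = 1) :
    (∀ l > (0:ℝ), d₂ * τ * Real.pi ^ 2 / l ^ 2 - cT ≤ lambdaOne d₂ τ cT J l) ∧
    Tendsto (lambdaOne d₂ τ cT J) (nhdsWithin 0 (Ioi 0)) atTop ∧
    -cT ≤ liminf (lambdaOne d₂ τ cT J) atTop := by
  have hJc : Continuous J := hJlip.continuous
  have key : ∀ l > (0:ℝ), d₂ * τ * Real.pi ^ 2 / l ^ 2 - cT ≤ lambdaOne d₂ τ cT J l := by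
    intro l hl
    apply le_csInf ⟨_, sine_mem d₂ τ cT J hl⟩
    rintro r ⟨ω, ω', hderiv, hc, h0, hll, hpos, rfl⟩
    exact rayleigh_lower hl hd₂ hτ hτ1 hJc hJpos hJint hJ1 hderiv hc h0 hll hpos
  refine ⟨key, ?_, ?_⟩
  · have htendbound : Tendsto (fun l : ℝ => d₂ * τ * Real.pi ^ 2 / l ^ 2 - cT)
        (𝓝[>] (0:ℝ)) atTop := by
      apply tendsto_atTop_add_const_right
      have h1 : Tendsto (fun l : ℝ => l ^ 2) (𝓝[>] (0:ℝ)) (𝓝[>] (0:ℝ)) := by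
        rw [tendsto_nhdsWithin_iff]
        constructor
        · have h2 : Continuous fun l : ℝ => l ^ 2 := by fun_prop
          have := (h2.tendsto (0:ℝ)).mono_left (nhdsWithin_le_nhds (s := Ioi (0:ℝ)))
          simpa using this
        · filter_upwards [self_mem_nhdsWithin] with l (hl : (0:ℝ) < l)
          exact pow_pos hl 2
      have h2 : Tendsto (fun l : ℝ => (l ^ 2)⁻¹) (𝓝[>] (0:ℝ)) atTop :=
        tendsto_inv_nhdsGT_zero.comp h1
      have h3 := h2.const_mul_atTop (show (0:ℝ) < d₂ * τ * Real.pi ^ 2 by positivity)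
      refine h3.congr fun l => ?_
      rw [div_eq_mul_inv]
    apply tendsto_atTop_mono' _ _ htendbound
    filter_upwards [self_mem_nhdsWithin] with l (hl : (0:ℝ) < l)
    exact key l hl
  · have hev : ∀ᶠ l in atTop, -cT ≤ lambdaOne d₂ τ cT J l := by
      filter_upwards [eventually_gt_atTop (0:ℝ)] with l hl
      have h1 := key l hl
      have h2 : (0:ℝ) ≤ d₂ * τ * Real.pi ^ 2 / l ^ 2 := by positivity
      linarith
    have hub : ∀ᶠ l in atTop,
        lambdaOne d₂ τ cT J l ≤ d₂ * τ * Real.pi ^ 2 + d₂ * (1 - τ) := by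
      filter_upwards [eventually_ge_atTop (1:ℝ)] with l hl1
      have hl : (0:ℝ) < l := lt_of_lt_of_le one_pos hl1
      have hbdd : BddBelow {r : ℝ | ∃ ω ω' : ℝ → ℝ,
          (∀ x, HasDerivAt ω (ω' x) x) ∧ Continuous ω' ∧
          ω 0 = 0 ∧ ω l = 0 ∧ (0 < ∫ x in (0:ℝ)..l, (ω x) ^ 2) ∧
          r = rayleighQuot d₂ τ cT J l ω ω'} := by
        refine ⟨d₂ * τ * Real.pi ^ 2 / l ^ 2 - cT, ?_⟩
        rintro r ⟨ω, ω', hderiv, hc, h0, hll, hpos, rfl⟩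
        exact rayleigh_lower hl hd₂ hτ hτ1 hJc hJpos hJint hJ1 hderiv hc h0 hll hpos
      have hle : lambdaOne d₂ τ cT J l ≤ rayleighQuot d₂ τ cT J l
          (fun x => Real.sin (Real.pi / l * x))
          (fun x => Real.pi / l * Real.cos (Real.pi / l * x)) :=
        csInf_le hbdd (sine_mem d₂ τ cT J hl)
      refine hle.trans ?_
      have hB0 : 0 ≤ ∫ x in (0:ℝ)..l, ∫ y in (0:ℝ)..l,
          J (x - y) * Real.sin (Real.pi / l * y) * Real.sin (Real.pi / l * x) := by
        apply intervalIntegral.integral_nonneg hl.le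
        intro x hx
        apply intervalIntegral.integral_nonneg hl.le
        intro y hy
        exact mul_nonneg (mul_nonneg (hJpos _) (sine_nonneg_on hl hy)) (sine_nonneg_on hl hx)
      simp only [rayleighQuot]
      rw [sine_sq_int hl, cosine_sq_int hl]
      set B := ∫ x in (0:ℝ)..l, ∫ y in (0:ℝ)..l,
          J (x - y) * Real.sin (Real.pi / l * y) * Real.sin (Real.pi / l * x) with hBdef
      have hCpos : (0:ℝ) < (Real.pi / l)⁻¹ * (Real.pi / 2) := by positivity
      have hτ' : (0:ℝ) ≤ 1 - τ := by linarith
      have h1 : (d₂ * τ * ((Real.pi / l) ^ 2 * ((Real.pi / l)⁻¹ * (Real.pi / 2))) -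
            d₂ * (1 - τ) * B) / ((Real.pi / l)⁻¹ * (Real.pi / 2)) ≤ d₂ * τ * (Real.pi / l) ^ 2 := by
        rw [div_le_iff₀ hCpos]
        nlinarith [mul_nonneg (mul_nonneg hd₂.le hτ') hB0]
      have h2 : d₂ * τ * (Real.pi / l) ^ 2 ≤ d₂ * τ * Real.pi ^ 2 := by
        have hple : Real.pi / l ≤ Real.pi := div_le_self Real.pi_pos.le hl1
        have hppos : (0:ℝ) ≤ Real.pi / l := (div_pos Real.pi_pos hl).le
        have := pow_le_pow_left₀ hppos hple 2
        nlinarith [mul_nonneg hd₂.le hτ.le]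
      linarith
    apply le_liminf_of_le
    · exact isCoboundedUnder_ge_of_eventually_le _ hub
    · exact hev
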